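/- Fix a real number t ≠ 0 and for a Schwartz function f : ℝ → ℂ define (K_t f)(x) = (4πti)^{-1/2} e^{ix²/(4t)} ∫_ℝ e^{-ixy/(2t)} e^{iy²/(4t)} f(y) dy, where (4πti)^{-1/2} is the principal branch of the square root. Then for every Schwartz function f, the function K_t f is differentiable and the intertwining identity K_t( (y f(y) - f'(y))/√2 )(x) = ( x (K_t f)(x) + (2ti - 1) (K_t f)'(x) )/√2 holds for all x ∈ ℝ; that is, K_t ∘ a⁺ = b⁺ ∘ K_t, where (a⁺f)(y) = (y f(y) - f'(y))/√2 is the harmonic-oscillator creation operator and (b⁺g)(x) = (x g(x) + (2ti-1) g'(x))/√2. -/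

import Mathlib

open MeasureTheory

noncomputable section

/-- The integral transform
`(K_t f)(x) = (4πti)^{-1/2} e^{ix²/(4t)} ∫_ℝ e^{-ixy/(2t)} e^{iy²/(4t)} f(y) dy`
(principal branch of the square root). -/
def fresnelK (t : ℝ) (f : ℝ → ℂ) (x : ℝ) : ℂ :=
  (4 * (Real.pi : ℂ) * (t : ℂ) * Complex.I) ^ (-(1/2 : ℂ)) *
    Complex.exp (Complex.I * (x : ℂ) ^ 2 / (4 * (t : ℂ))) *
    ∫ y : ℝ, Complex.exp (-(Complex.I * (x : ℂ) * (y : ℂ)) / (2 * (t : ℂ))) *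
      Complex.exp (Complex.I * (y : ℂ) ^ 2 / (4 * (t : ℂ))) * f y

set_option maxHeartbeats 1000000 in
/-- For `t ≠ 0` and `f` Schwartz, `K_t f` is differentiable and
`K_t ∘ a⁺ = b⁺ ∘ K_t`, where `(a⁺f)(y) = (y f(y) - f'(y))/√2` is the creation operator and
`(b⁺g)(x) = (x g(x) + (2ti-1) g'(x))/√2`. -/
theorem fresnelK_intertwines_creation (t : ℝ) (ht : t ≠ 0) (f : SchwartzMap ℝ ℂ) :
    Differentiable ℝ (fresnelK t f) ∧
    ∀ x : ℝ,
      fresnelK t (fun y : ℝ => ((y : ℂ) * f y - deriv (⇑f) y) / (Real.sqrt 2 : ℂ)) x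
        = ((x : ℂ) * fresnelK t f x
            + (2 * (t : ℂ) * Complex.I - 1) * deriv (fresnelK t f) x) / (Real.sqrt 2 : ℂ) := by
  have hπ : (Real.pi : ℂ) ≠ 0 := by exact_mod_cast Real.pi_ne_zero
  have htc : (t : ℂ) ≠ 0 := by exact_mod_cast ht
  have hI : Complex.I ≠ 0 := Complex.I_ne_zero
  have hs2 : ((Real.sqrt 2 : ℝ) : ℂ) ≠ 0 := by
    have h : Real.sqrt 2 ≠ 0 := by positivity
    exact_mod_cast h
  -- continuity of the exponents
  have hcont1 : Continuous fun y : ℝ => Complex.I * (y : ℂ) ^ 2 / (4 * (t : ℂ)) :=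
    (continuous_const.mul (Complex.continuous_ofReal.pow 2)).div_const _
  have hcont2 : ∀ x : ℝ, Continuous fun y : ℝ =>
      -(Complex.I * (x : ℂ) * (y : ℂ)) / (2 * (t : ℂ)) := fun x =>
    ((continuous_const.mul Complex.continuous_ofReal).neg).div_const _
  -- the modified function g
  set g : ℝ → ℂ := fun y => Complex.exp (Complex.I * (y : ℂ) ^ 2 / (4 * (t : ℂ))) * f y
    with hg_def
  -- norm-1 exponentials
  have key_norm : ∀ r : ℝ, ‖Complex.exp ((r : ℂ) * Complex.I)‖ = 1 := fun r =>
    Complex.norm_exp_ofReal_mul_I r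
  have hexp1 : ∀ y : ℝ, ‖Complex.exp (Complex.I * (y : ℂ) ^ 2 / (4 * (t : ℂ)))‖ = 1 := by
    intro y
    have h : Complex.I * (y : ℂ) ^ 2 / (4 * (t : ℂ))
        = ((y ^ 2 / (4 * t) : ℝ) : ℂ) * Complex.I := by push_cast; ring
    rw [h, key_norm]
  have hexp2 : ∀ x y : ℝ,
      ‖Complex.exp (-(Complex.I * (x : ℂ) * (y : ℂ)) / (2 * (t : ℂ)))‖ = 1 := by
    intro x y
    have h : -(Complex.I * (x : ℂ) * (y : ℂ)) / (2 * (t : ℂ))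
        = ((-(x * y) / (2 * t) : ℝ) : ℂ) * Complex.I := by push_cast; ring
    rw [h, key_norm]
  -- continuity of g
  have hg_cont : Continuous g :=
    (Complex.continuous_exp.comp hcont1).mul f.continuous
  -- integrability of g
  have hg_norm : ∀ y : ℝ, ‖g y‖ = ‖f y‖ := by
    intro y; rw [hg_def]; simp only [norm_mul, hexp1, one_mul]
  have hg_int : Integrable g := by
    refine f.integrable.norm.mono' hg_cont.aestronglyMeasurable ?_
    exact Filter.Eventually.of_forall fun y => le_of_eq (hg_norm y)
  -- integrability of y • g y
  have hyg_int : Integrable (fun y : ℝ => y • g y) := by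
    refine (f.integrable_pow_mul volume 1).mono'
      (continuous_id.smul hg_cont).aestronglyMeasurable ?_
    refine Filter.Eventually.of_forall fun y => ?_
    rw [norm_smul, hg_norm]
    simp
  -- derivative of f
  have hf'_eq : deriv (⇑f) = ⇑(SchwartzMap.derivCLM ℝ ℂ f) := by
    funext y; rw [SchwartzMap.derivCLM_apply]
  have hf'_cont : Continuous (deriv (⇑f)) := by
    rw [hf'_eq]; exact (SchwartzMap.derivCLM ℝ ℂ f).continuous
  have hf'_int : Integrable (deriv (⇑f)) := by
    rw [hf'_eq]; exact (SchwartzMap.derivCLM ℝ ℂ f).integrable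
  -- derivative of g
  have hg_deriv : ∀ y : ℝ, HasDerivAt g
      (Complex.I * (y : ℂ) / (2 * (t : ℂ)) * g y
        + Complex.exp (Complex.I * (y : ℂ) ^ 2 / (4 * (t : ℂ))) * deriv (⇑f) y) y := by
    intro y
    have hz : HasDerivAt (fun z : ℂ => Complex.I * z ^ 2 / (4 * (t : ℂ)))
        (Complex.I * (y : ℂ) / (2 * (t : ℂ))) (y : ℂ) := by
      have h := ((hasDerivAt_pow 2 ((y : ℝ) : ℂ)).const_mul Complex.I).div_const (4 * (t : ℂ))
      convert! h using 1
      field_simp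
      ring
    have hE : HasDerivAt
        (fun y : ℝ => Complex.exp (Complex.I * (y : ℂ) ^ 2 / (4 * (t : ℂ))))
        (Complex.exp (Complex.I * (y : ℂ) ^ 2 / (4 * (t : ℂ)))
          * (Complex.I * (y : ℂ) / (2 * (t : ℂ)))) y :=
      (hz.cexp).comp_ofReal
    have hfd : HasDerivAt (⇑f) (deriv (⇑f) y) y := f.differentiableAt.hasDerivAt
    have h := hE.mul hfd
    convert! h using 1
    rw [hg_def]
    ring
  have hg_diff : Differentiable ℝ g := fun y => (hg_deriv y).differentiableAt
  have hdg_eq : deriv g = fun y : ℝ => Complex.I * (y : ℂ) / (2 * (t : ℂ)) * g y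
      + Complex.exp (Complex.I * (y : ℂ) ^ 2 / (4 * (t : ℂ))) * deriv (⇑f) y := by
    funext y; exact (hg_deriv y).deriv
  have hdg_cont : Continuous (deriv g) := by
    rw [hdg_eq]
    apply Continuous.add
    · exact ((continuous_const.mul Complex.continuous_ofReal).div_const _).mul hg_cont
    · exact (Complex.continuous_exp.comp hcont1).mul hf'_cont
  have hdg_int : Integrable (deriv g) := by
    rw [hdg_eq]
    apply Integrable.add
    · have h1 : Integrable (fun y : ℝ => (Complex.I / (2 * (t : ℂ))) * (y • g y)) :=
        hyg_int.const_mul _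
      refine h1.congr (Filter.Eventually.of_forall fun y => ?_)
      show Complex.I / (2 * (t : ℂ)) * (y • g y)
          = Complex.I * (y : ℂ) / (2 * (t : ℂ)) * g y
      rw [Complex.real_smul]
      ring
    · refine hf'_int.norm.mono'
        ((Complex.continuous_exp.comp hcont1).mul hf'_cont).aestronglyMeasurable ?_
      refine Filter.Eventually.of_forall fun y => ?_
      rw [norm_mul, hexp1, one_mul]
  -- conversion between the kernel integral and the Fourier integral
  have hKf : ∀ (u : ℝ → ℂ) (x : ℝ),
      FourierTransform.fourier u (x / (4 * Real.pi * t))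
        = ∫ y : ℝ, Complex.exp (-(Complex.I * (x : ℂ) * (y : ℂ)) / (2 * (t : ℂ))) * u y := by
    intro u x
    rw [Real.fourier_real_eq_integral_exp_smul]
    congr 1
    funext y
    rw [smul_eq_mul]
    congr 2
    push_cast
    field_simp
    ring
  -- abbreviations
  set F : ℝ → ℂ := FourierTransform.fourier g with hF_def
  set D : ℝ → ℂ :=
    FourierTransform.fourier (fun y : ℝ => (-2 * (Real.pi : ℂ) * Complex.I * (y : ℂ)) • g y)
    with hD_def
  set E : ℝ → ℂ := fun x : ℝ => Complex.exp (Complex.I * (x : ℂ) ^ 2 / (4 * (t : ℂ)))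
    with hE_def
  set c : ℂ := (4 * (Real.pi : ℂ) * (t : ℂ) * Complex.I) ^ (-(1/2 : ℂ)) with hc_def
  -- K f rewritten
  have hKeq : ∀ x : ℝ, fresnelK t (⇑f) x = c * (E x * F (x / (4 * Real.pi * t))) := by
    intro x
    simp only [fresnelK, hc_def, hE_def, hF_def]
    rw [hKf g x]
    simp only [hg_def, mul_assoc]
  have hKfun : fresnelK t (⇑f) = fun x => c * (E x * F (x / (4 * Real.pi * t))) :=
    funext hKeq
  -- derivative of F
  have hF_deriv : ∀ ξ₀ : ℝ, HasDerivAt F (D ξ₀) ξ₀ := fun ξ₀ =>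
    Real.hasDerivAt_fourier hg_int hyg_int ξ₀
  -- derivative of E
  have hE_deriv : ∀ x : ℝ,
      HasDerivAt E (Complex.I * (x : ℂ) / (2 * (t : ℂ)) * E x) x := by
    intro x
    have hz : HasDerivAt (fun z : ℂ => Complex.I * z ^ 2 / (4 * (t : ℂ)))
        (Complex.I * (x : ℂ) / (2 * (t : ℂ))) (x : ℂ) := by
      have h := ((hasDerivAt_pow 2 ((x : ℝ) : ℂ)).const_mul Complex.I).div_const (4 * (t : ℂ))
      convert! h using 1
      field_simp
      ring
    have h := (hz.cexp).comp_ofReal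
    rw [hE_def]
    convert h using 1
    ring
  -- derivative of K f
  have hK_deriv : ∀ x : ℝ, HasDerivAt (fresnelK t (⇑f))
      (c * (Complex.I * (x : ℂ) / (2 * (t : ℂ)) * E x * F (x / (4 * Real.pi * t))
        + E x * ((1 / (4 * Real.pi * t) : ℝ) • D (x / (4 * Real.pi * t))))) x := by
    intro x
    rw [hKfun]
    have hξd : HasDerivAt (fun x : ℝ => x / (4 * Real.pi * t)) (1 / (4 * Real.pi * t)) x := by
      simpa using (hasDerivAt_id x).div_const (4 * Real.pi * t)
    have hcomp : HasDerivAt (fun x : ℝ => F (x / (4 * Real.pi * t)))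
        ((1 / (4 * Real.pi * t) : ℝ) • D (x / (4 * Real.pi * t))) x :=
      (hF_deriv (x / (4 * Real.pi * t))).scomp x hξd
    exact ((hE_deriv x).mul hcomp).const_mul c
  refine ⟨fun x => (hK_deriv x).differentiableAt, ?_⟩
  intro x
  have hKx : deriv (fresnelK t (⇑f)) x
      = c * (Complex.I * (x : ℂ) / (2 * (t : ℂ)) * E x * F (x / (4 * Real.pi * t))
        + E x * ((1 / (4 * Real.pi * t) : ℝ) • D (x / (4 * Real.pi * t)))) :=
    (hK_deriv x).deriv
  -- integrability of the two pieces
  have hA_int : Integrable (fun y : ℝ =>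
      Complex.exp (-(Complex.I * (x : ℂ) * (y : ℂ)) / (2 * (t : ℂ))) * ((y : ℂ) * g y)) := by
    refine (f.integrable_pow_mul volume 1).mono'
      ((Complex.continuous_exp.comp (hcont2 x)).mul
        (Complex.continuous_ofReal.mul hg_cont)).aestronglyMeasurable ?_
    refine Filter.Eventually.of_forall fun y => ?_
    rw [norm_mul, hexp2, one_mul, norm_mul, hg_norm]
    simp
  have hB_int : Integrable (fun y : ℝ =>
      Complex.exp (-(Complex.I * (x : ℂ) * (y : ℂ)) / (2 * (t : ℂ))) * deriv g y) := by
    refine hdg_int.norm.mono'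
      ((Complex.continuous_exp.comp (hcont2 x)).mul hdg_cont).aestronglyMeasurable ?_
    refine Filter.Eventually.of_forall fun y => ?_
    rw [norm_mul, hexp2, one_mul]
  -- the A integral
  set A : ℂ := ∫ y : ℝ,
      Complex.exp (-(Complex.I * (x : ℂ) * (y : ℂ)) / (2 * (t : ℂ))) * ((y : ℂ) * g y)
    with hA_def
  -- relation between D and A
  have hDA : D (x / (4 * Real.pi * t)) = -2 * (Real.pi : ℂ) * Complex.I * A := by
    rw [hD_def, hKf, hA_def, ← integral_const_mul]
    refine integral_congr_ae (Filter.Eventually.of_forall fun y => ?_)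
    show Complex.exp _ * ((-2 * (Real.pi : ℂ) * Complex.I * (y : ℂ)) • g y)
        = -2 * (Real.pi : ℂ) * Complex.I *
          (Complex.exp (-(Complex.I * (x : ℂ) * (y : ℂ)) / (2 * (t : ℂ))) * ((y : ℂ) * g y))
    rw [smul_eq_mul]
    ring
  -- integration by parts: the B integral
  have hBrel : (∫ y : ℝ,
      Complex.exp (-(Complex.I * (x : ℂ) * (y : ℂ)) / (2 * (t : ℂ))) * deriv g y)
      = Complex.I * (x : ℂ) / (2 * (t : ℂ)) * F (x / (4 * Real.pi * t)) := by
    rw [← hKf (deriv g) x]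
    simp only [Real.fourier_deriv hg_int hg_diff hdg_int, hF_def, smul_eq_mul]
    congr 1
    push_cast
    field_simp
    ring
  -- split the left-hand integral
  have hsplit : (∫ y : ℝ,
      Complex.exp (-(Complex.I * (x : ℂ) * (y : ℂ)) / (2 * (t : ℂ))) *
        Complex.exp (Complex.I * (y : ℂ) ^ 2 / (4 * (t : ℂ))) *
        (((y : ℂ) * f y - deriv (⇑f) y) / (Real.sqrt 2 : ℂ)))
      = ((1 + Complex.I / (2 * (t : ℂ))) * A
          - Complex.I * (x : ℂ) / (2 * (t : ℂ)) * F (x / (4 * Real.pi * t)))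
        / (Real.sqrt 2 : ℂ) := by
    have hpt : ∀ y : ℝ,
        Complex.exp (-(Complex.I * (x : ℂ) * (y : ℂ)) / (2 * (t : ℂ))) *
          Complex.exp (Complex.I * (y : ℂ) ^ 2 / (4 * (t : ℂ))) *
          (((y : ℂ) * f y - deriv (⇑f) y) / (Real.sqrt 2 : ℂ))
        = ((1 + Complex.I / (2 * (t : ℂ))) *
            (Complex.exp (-(Complex.I * (x : ℂ) * (y : ℂ)) / (2 * (t : ℂ)))
              * ((y : ℂ) * g y))
          - Complex.exp (-(Complex.I * (x : ℂ) * (y : ℂ)) / (2 * (t : ℂ))) * deriv g y)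
          / (Real.sqrt 2 : ℂ) := by
      intro y
      have hdgy : deriv g y = Complex.I * (y : ℂ) / (2 * (t : ℂ)) * g y
          + Complex.exp (Complex.I * (y : ℂ) ^ 2 / (4 * (t : ℂ))) * deriv (⇑f) y := by
        rw [hdg_eq]
      rw [hdgy]
      simp only [hg_def]
      field_simp
      ring
    rw [integral_congr_ae (Filter.Eventually.of_forall hpt)]
    rw [integral_div]
    rw [integral_sub (hA_int.const_mul _) hB_int, integral_const_mul, hBrel, hA_def]
  -- put everything together
  have hLHS : fresnelK t
      (fun y : ℝ => ((y : ℂ) * f y - deriv (⇑f) y) / (Real.sqrt 2 : ℂ)) x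
      = c * (E x *
        (((1 + Complex.I / (2 * (t : ℂ))) * A
          - Complex.I * (x : ℂ) / (2 * (t : ℂ)) * F (x / (4 * Real.pi * t)))
        / (Real.sqrt 2 : ℂ))) := by
    simp only [fresnelK, hc_def, hE_def]
    rw [hsplit]
    ring
  rw [hLHS, hKeq x, hKx, hDA]
  rw [Complex.real_smul]
  push_cast
  have e1 : (t : ℂ) * ((t : ℂ))⁻¹ = 1 := mul_inv_cancel₀ htc
  have e2 : ((Real.pi : ℝ) : ℂ) * (((Real.pi : ℝ) : ℂ))⁻¹ = 1 := mul_inv_cancel₀ hπ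
  linear_combination (c * E x * (A - (x : ℂ) * F (x / (4 * Real.pi * t)))
      / ((Real.sqrt 2 : ℝ) : ℂ)) * Complex.I_sq
    + (-(c * E x * Complex.I * A * ((t : ℂ))⁻¹ / (2 * ((Real.sqrt 2 : ℝ) : ℂ)))
        + c * E x * Complex.I ^ 2 * A * (t : ℂ) * ((t : ℂ))⁻¹ / ((Real.sqrt 2 : ℝ) : ℂ)) * e2
    + (c * E x * Complex.I ^ 2 * (A - (x : ℂ) * F (x / (4 * Real.pi * t)))
        / ((Real.sqrt 2 : ℝ) : ℂ)) * e1
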